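/- Let D be a positive non-square integer with D ≡ 1 (mod 8), and write D = f²·D₀ where D₀ is the (1,2)-primitive part. For each divisor r of f define S_{D/r²} = ∑_{0 < e < √(D/r²), e odd} (-1)^((e-1)/2) · e · m_{D/r²}(e), where m_{D'}(e) counts triples (a,b,d) with a > 0, d > 0, 0 ≤ b < a, ad = (D' - e²)/8, gcd(a,b,d,e) = 1. Then ∑_{0 < e < √D, e odd} (-1)^((e-1)/2) · e · σ₁((D - e²)/8) = ∑_{r | f} (-1)^((r-1)/2) · r · S_{D/r²}. -/

import Mathlib

open Finset

def Tset (N : ℤ) : Set (ℤ × ℤ × ℤ) :=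
  {p | 0 < p.1 ∧ 0 < p.2.2 ∧ 0 ≤ p.2.1 ∧ p.2.1 < p.1 ∧ p.1 * p.2.2 = N}

lemma Tset_eq_coe (N : ℕ) (hN : 0 < N) :
    Tset (N : ℤ) = ↑(((N.divisors.sigma fun a => Finset.range a)).image
      (fun q => ((q.1 : ℤ), (q.2 : ℤ), ((N / q.1 : ℕ) : ℤ)))) := by
  ext ⟨x, y, z⟩
  simp only [Tset, Set.mem_setOf_eq, Finset.coe_image, Set.mem_image, Finset.mem_coe,
    Finset.mem_sigma, Nat.mem_divisors, Finset.mem_range]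
  constructor
  · rintro ⟨hx, hz, hy0, hyx, hxz⟩
    have hxa : ((x.toNat : ℤ)) = x := Int.toNat_of_nonneg hx.le
    have hyb : ((y.toNat : ℤ)) = y := Int.toNat_of_nonneg hy0
    have hzc : ((z.toNat : ℤ)) = z := Int.toNat_of_nonneg hz.le
    have hac : x.toNat * z.toNat = N := by
      have : ((x.toNat * z.toNat : ℕ) : ℤ) = (N : ℤ) := by push_cast [hxa, hzc]; exact hxz
      exact_mod_cast this
    have ha0 : 0 < x.toNat := by omega
    have hdiv : N / x.toNat = z.toNat := by
      rw [← hac, Nat.mul_div_cancel_left _ ha0]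
    refine ⟨⟨x.toNat, y.toNat⟩, ⟨⟨⟨z.toNat, hac.symm⟩, hN.ne'⟩, by dsimp only; omega⟩, ?_⟩
    dsimp only
    rw [hdiv, hxa, hyb, hzc]
  · rintro ⟨⟨a, b⟩, ⟨⟨⟨c, hc⟩, -⟩, hb⟩, h⟩
    dsimp only at hb h
    simp only [Prod.mk.injEq] at h
    obtain ⟨rfl, rfl, rfl⟩ := h
    have ha : 0 < a := by
      rcases Nat.eq_zero_or_pos a with h | h
      · subst h; simp at hc; omega
      · exact h
    have hNd : a * (N / a) = N := Nat.mul_div_cancel' ⟨c, hc⟩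
    have hz : 0 < N / a := by
      rcases Nat.eq_zero_or_pos (N / a) with h | h
      · rw [h, mul_zero] at hNd; omega
      · exact h
    refine ⟨by exact_mod_cast ha, by exact_mod_cast hz, by positivity, by exact_mod_cast hb, ?_⟩
    exact_mod_cast congrArg (Nat.cast (R := ℤ)) hNd

lemma Tset_finite (N : ℕ) (hN : 0 < N) : (Tset (N : ℤ)).Finite := by
  rw [Tset_eq_coe N hN]; exact Finset.finite_toSet _

lemma Tset_ncard (N : ℕ) (hN : 0 < N) :
    (Tset (N : ℤ)).ncard = ArithmeticFunction.sigma 1 N := by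
  rw [Tset_eq_coe N hN, Set.ncard_coe_finset, Finset.card_image_of_injOn, Finset.card_sigma]
  · simp [ArithmeticFunction.sigma_one_apply]
  · rintro ⟨a, b⟩ - ⟨a', b'⟩ - h
    simp only [Prod.mk.injEq] at h
    have h1 : a = a' := by exact_mod_cast h.1
    have h2 : b = b' := by exact_mod_cast h.2.1
    simp_all

lemma ncard_finset_biUnion {ι α : Type*} (t : Finset ι) (S : ι → Set α)
    (hfin : ∀ i ∈ t, (S i).Finite)
    (hdis : ∀ i ∈ t, ∀ j ∈ t, i ≠ j → Disjoint (S i) (S j)) :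
    (⋃ i ∈ t, S i).ncard = ∑ i ∈ t, (S i).ncard := by
  classical
  induction t using Finset.induction_on with
  | empty => simp
  | @insert a t ha ih =>
    rw [Finset.set_biUnion_insert, Finset.sum_insert ha,
      Set.ncard_union_eq ?_ (hfin a (Finset.mem_insert_self a t)) ?_,
      ih (fun i hi => hfin i (Finset.mem_insert_of_mem hi))
        (fun i hi j hj hij => hdis i (Finset.mem_insert_of_mem hi) j
          (Finset.mem_insert_of_mem hj) hij)]
    · rw [Set.disjoint_iUnion₂_right]
      intro i hi
      exact hdis a (Finset.mem_insert_self a t) i (Finset.mem_insert_of_mem hi)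
        (fun h => ha (h ▸ hi))
    · exact Set.Finite.biUnion (Finset.finite_toSet t)
        (fun i hi => hfin i (Finset.mem_insert_of_mem hi))

lemma odd_sq_mod8 {n : ℕ} (hn : Odd n) : n ^ 2 % 8 = 1 := by
  obtain ⟨m, rfl⟩ := hn
  have h2 : 2 ∣ m * m + m := by
    rcases Nat.even_or_odd m with ⟨k, hk⟩ | ⟨k, hk⟩ <;> subst hk <;>
      [exact ⟨2*k*k+k, by ring⟩; exact ⟨2*k*k+3*k+1, by ring⟩]
  have h3 : (2 * m + 1) ^ 2 = 4 * (m * m + m) + 1 := by ring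
  omega

lemma signmul {r e : ℕ} (hr : Odd r) (he : Odd e) :
    (-1 : ℤ) ^ ((r * e - 1) / 2) = (-1) ^ ((r - 1) / 2) * (-1) ^ ((e - 1) / 2) := by
  obtain ⟨a, rfl⟩ := hr
  obtain ⟨b, rfl⟩ := he
  have h1 : ((2 * a + 1) * (2 * b + 1) - 1) / 2 = 2 * (a * b) + a + b := by ring_nf; omega
  have h2 : (2 * a + 1 - 1) / 2 = a := by omega
  have h3 : (2 * b + 1 - 1) / 2 = b := by omega
  rw [h1, h2, h3, pow_add, pow_add, pow_mul, neg_one_sq, one_pow, one_mul]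

lemma gcd_scale (g : ℕ) (a b d e' : ℤ) :
    Int.gcd ((g : ℤ) * a) ((Int.gcd ((g : ℤ) * b) ((Int.gcd ((g : ℤ) * d) ((g : ℤ) * e') : ℕ) : ℤ) : ℕ) : ℤ)
      = g * Int.gcd a ((Int.gcd b ((Int.gcd d e' : ℕ) : ℤ) : ℕ) : ℤ) := by
  have h1 : Int.gcd ((g : ℤ) * d) ((g : ℤ) * e') = g * Int.gcd d e' := by
    rw [Int.gcd_mul_left]; simp
  rw [h1]
  have h2 : Int.gcd ((g : ℤ) * b) (((g * Int.gcd d e' : ℕ) : ℤ))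
      = g * Int.gcd b ((Int.gcd d e' : ℕ) : ℤ) := by
    push_cast
    rw [Int.gcd_mul_left]; simp
  rw [h2]
  push_cast
  rw [Int.gcd_mul_left]; simp

/-- Key: if `r` is odd and `r² ∣ D` where `D = f²·D₀`, `D ≡ 1 [MOD 8]`, `D₀` primitive,
then `r ∣ f`. -/
lemma key_dvd (D f D₀ : ℕ) (hD : 0 < D) (hmod : D % 8 = 1) (hfD : D = f ^ 2 * D₀)
    (hprim : ¬ ∃ g D' : ℕ, 1 < g ∧ D₀ = g ^ 2 * D' ∧
      (D' % 8 = 0 ∨ D' % 8 = 1 ∨ D' % 8 = 4))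
    (r : ℕ) (hr : Odd r) (hr2 : r ^ 2 ∣ D) : r ∣ f := by
  have hf0 : f ≠ 0 := by rintro rfl; simp at hfD; omega
  have hD₀0 : D₀ ≠ 0 := by rintro rfl; simp at hfD; omega
  have hr0 : r ≠ 0 := by rintro rfl; exact (Nat.not_odd_iff_even.mpr ⟨0, rfl⟩) hr
  -- D odd, f odd, D₀ ≡ 1 mod 8
  have hDodd : Odd D := by rw [Nat.odd_iff]; omega
  have hfodd : Odd f := by
    rcases Nat.even_or_odd f with ⟨k, rfl⟩ | h
    · exfalso
      have : D = 2 * (2 * k * k * D₀) := by rw [hfD]; ring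
      omega
    · exact h
  have hD₀mod8 : D₀ % 8 = 1 := by
    have h1 : f ^ 2 % 8 = 1 := odd_sq_mod8 hfodd
    have h2 := Nat.mul_mod (f ^ 2) D₀ 8
    rw [← hfD, h1, one_mul] at h2
    omega
  by_contra hrf
  rw [← Nat.factorization_le_iff_dvd hr0 hf0] at hrf
  simp only [Finsupp.le_iff, not_forall] at hrf
  obtain ⟨p, hp1, hp2⟩ := hrf
  push_neg at hp2
  have hppos : 0 < r.factorization p := by omega
  have hpdvd : p ∣ r := Nat.dvd_of_factorization_pos (by omega)
  have hpprime : p.Prime := Nat.prime_of_mem_primeFactors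
    ((Nat.support_factorization r) ▸ hp1)
  have hpodd : Odd p := by
    rcases Nat.even_or_odd p with h | h
    · exfalso
      have h2 : (2 : ℕ) ∣ r := dvd_trans h.two_dvd hpdvd
      rw [Nat.odd_iff] at hr; omega
    · exact h
  -- p² ∣ D₀
  have hD0 : D ≠ 0 := hD.ne'
  have hvD : D.factorization p = 2 * f.factorization p + D₀.factorization p := by
    rw [hfD, Nat.factorization_mul (pow_ne_zero 2 hf0) hD₀0, Nat.factorization_pow]
    simp [mul_comm]
  have hvr : 2 * r.factorization p ≤ D.factorization p := by
    have := (Nat.factorization_le_iff_dvd (pow_ne_zero 2 hr0) hD0).mpr hr2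
    have := this p
    rwa [Nat.factorization_pow, Finsupp.smul_apply, smul_eq_mul] at this
  have hp2D₀ : p ^ 2 ∣ D₀ :=
    (Nat.Prime.pow_dvd_iff_le_factorization hpprime hD₀0).mpr (by omega)
  obtain ⟨D', hD'⟩ := hp2D₀
  apply hprim
  refine ⟨p, D', hpprime.one_lt, hD', Or.inr (Or.inl ?_)⟩
  have hp8 : p ^ 2 % 8 = 1 := odd_sq_mod8 hpodd
  have h3 := Nat.mul_mod (p ^ 2) D' 8
  rw [← hD', hp8, one_mul] at h3
  omega

lemma int_div_eq (D' e' : ℕ) (hle : e' ^ 2 ≤ D') (h8 : 8 ∣ D' - e' ^ 2) :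
    ((D' : ℤ) - (e' : ℤ) ^ 2) / 8 = (((D' - e' ^ 2) / 8 : ℕ) : ℤ) := by
  obtain ⟨k, hk⟩ := h8
  have h1 : ((D' : ℤ) - (e' : ℤ) ^ 2) = 8 * k := by
    have : ((D' - e' ^ 2 : ℕ) : ℤ) = ((8 * k : ℕ) : ℤ) := by exact_mod_cast hk
    rw [Nat.cast_sub hle] at this
    push_cast at this ⊢
    linarith
  have h2 : (D' - e' ^ 2) / 8 = k := by omega
  rw [h1, h2, Int.mul_ediv_cancel_left _ (by norm_num)]

lemma mod8_div (D g : ℕ) (hD : D % 8 = 1) (hg : Odd g) (hdvd : g ^ 2 ∣ D) :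
    D / g ^ 2 % 8 = 1 := by
  obtain ⟨m, rfl⟩ := hdvd
  have hg0 : g ≠ 0 := by rintro rfl; simp [Nat.odd_iff] at hg
  rw [Nat.mul_div_cancel_left _ (Nat.pos_of_ne_zero (pow_ne_zero 2 hg0))]
  have h1 : g ^ 2 % 8 = 1 := odd_sq_mod8 hg
  have h2 := Nat.mul_mod (g ^ 2) m 8
  rw [h1, one_mul] at h2
  omega

lemma odd_div {e g : ℕ} (he : Odd e) (h : g ∣ e) : Odd (e / g) := by
  have h1 : g * (e / g) = e := Nat.mul_div_cancel' h
  exact (Nat.odd_mul.mp (h1 ▸ he)).2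

lemma nat_sub_fact (D e r : ℕ) (hr2 : r ^ 2 ∣ D) (hre : r ∣ e) (hr0 : 0 < r) :
    D - e ^ 2 = r ^ 2 * (D / r ^ 2 - (e / r) ^ 2) := by
  obtain ⟨u, rfl⟩ := hr2
  obtain ⟨v, rfl⟩ := hre
  have h1 : r ^ 2 * u / r ^ 2 = u := Nat.mul_div_cancel_left _ (by positivity)
  have h2 : r * v / r = v := Nat.mul_div_cancel_left _ hr0
  rw [h1, h2, Nat.mul_sub, mul_pow]

noncomputable def mD (D' : ℕ) (e : ℕ) : ℕ :=
  {p : ℤ × ℤ × ℤ | 0 < p.1 ∧ 0 < p.2.2 ∧ 0 ≤ p.2.1 ∧ p.2.1 < p.1 ∧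
    p.1 * p.2.2 = ((D' : ℤ) - (e : ℤ) ^ 2) / 8 ∧
    Int.gcd p.1 (Int.gcd p.2.1 (Int.gcd p.2.2 (e : ℤ))) = 1}.ncard

def mDset (D' : ℕ) (e : ℕ) : Set (ℤ × ℤ × ℤ) :=
  {p : ℤ × ℤ × ℤ | 0 < p.1 ∧ 0 < p.2.2 ∧ 0 ≤ p.2.1 ∧ p.2.1 < p.1 ∧
    p.1 * p.2.2 = ((D' : ℤ) - (e : ℤ) ^ 2) / 8 ∧
    Int.gcd p.1 (Int.gcd p.2.1 (Int.gcd p.2.2 (e : ℤ))) = 1}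

lemma mD_eq (D' e : ℕ) : mD D' e = (mDset D' e).ncard := rfl

def scale (r : ℕ) (p : ℤ × ℤ × ℤ) : ℤ × ℤ × ℤ :=
  ((r : ℤ) * p.1, (r : ℤ) * p.2.1, (r : ℤ) * p.2.2)

lemma scale_injective (r : ℕ) (hr : 0 < r) : Function.Injective (scale r) := by
  rintro ⟨a, b, d⟩ ⟨a', b', d'⟩ h
  have hr0 : (r : ℤ) ≠ 0 := by exact_mod_cast hr.ne'
  simp only [scale, Prod.mk.injEq] at h
  obtain ⟨h1, h2, h3⟩ := h
  exact Prod.ext (mul_left_cancel₀ hr0 h1) (Prod.ext (mul_left_cancel₀ hr0 h2)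
    (mul_left_cancel₀ hr0 h3))

lemma mDset_finite (D' e' : ℕ) (hlt : e' ^ 2 < D') (h8 : 8 ∣ D' - e' ^ 2) :
    (mDset D' e').Finite := by
  have hN : 0 < (D' - e' ^ 2) / 8 := by omega
  apply Set.Finite.subset (Tset_finite _ hN)
  rintro ⟨a, b, d⟩ ⟨h1, h2, h3, h4, h5, -⟩
  exact ⟨h1, h2, h3, h4, by rw [h5, int_div_eq D' e' hlt.le h8]⟩

section Partition

variable (D f D₀ : ℕ) (hD : 0 < D) (hmod : D % 8 = 1) (hfD : D = f ^ 2 * D₀)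
  (hprim : ¬ ∃ g D' : ℕ, 1 < g ∧ D₀ = g ^ 2 * D' ∧
    (D' % 8 = 0 ∨ D' % 8 = 1 ∨ D' % 8 = 4))

include hD hmod hfD hprim

lemma T_partition (e : ℕ) (he : Odd e) (he2 : e ^ 2 < D) :
    ArithmeticFunction.sigma 1 ((D - e ^ 2) / 8)
      = ∑ r ∈ (e.gcd f).divisors, mD (D / r ^ 2) (e / r) := by
  have hf0 : f ≠ 0 := by rintro rfl; simp at hfD; omega
  have he0 : 0 < e := he.pos
  have h8 : 8 ∣ D - e ^ 2 := by
    have := odd_sq_mod8 he; omega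
  set Ne := (D - e ^ 2) / 8 with hNe_def
  have hNe : 0 < Ne := by omega
  have hNe8 : 8 * Ne = D - e ^ 2 := by omega
  -- facts for r ∣ e, r ∣ f
  have hfacts : ∀ r ∈ (e.gcd f).divisors, r ∣ e ∧ r ∣ f ∧ 0 < r ∧ Odd r ∧
      r ^ 2 ∣ D ∧ (e / r) ^ 2 < D / r ^ 2 ∧ 8 ∣ D / r ^ 2 - (e / r) ^ 2 ∧
      Ne = r ^ 2 * ((D / r ^ 2 - (e / r) ^ 2) / 8) := by
    intro r hrmem
    rw [Nat.mem_divisors] at hrmem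
    have hre : r ∣ e := hrmem.1.trans (Nat.gcd_dvd_left _ _)
    have hrf : r ∣ f := hrmem.1.trans (Nat.gcd_dvd_right _ _)
    have hr0 : 0 < r := Nat.pos_of_dvd_of_pos hre he0
    have hrodd : Odd r := by
      rcases Nat.even_or_odd r with h | h
      · exfalso
        have h2 : 2 ∣ e := dvd_trans h.two_dvd hre
        rw [Nat.odd_iff] at he; omega
      · exact h
    have hr2D : r ^ 2 ∣ D := hfD ▸ Dvd.dvd.mul_right (pow_dvd_pow_of_dvd hrf 2) D₀
    have hsub := nat_sub_fact D e r hr2D hre hr0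
    have hee : r * (e / r) = e := Nat.mul_div_cancel' hre
    have hDD : r ^ 2 * (D / r ^ 2) = D := Nat.mul_div_cancel' hr2D
    have hlt : (e / r) ^ 2 < D / r ^ 2 := by
      have h1 : r ^ 2 * (e / r) ^ 2 < r ^ 2 * (D / r ^ 2) := by
        rw [← mul_pow, hee, hDD]; exact he2
      exact lt_of_mul_lt_mul_left h1 (Nat.zero_le _)
    have h8' : 8 ∣ D / r ^ 2 - (e / r) ^ 2 := by
      have hx := mod8_div D r hmod hrodd hr2D
      have hy := odd_sq_mod8 (odd_div he hre)
      omega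
    have hNe_eq : Ne = r ^ 2 * ((D / r ^ 2 - (e / r) ^ 2) / 8) := by
      rw [hNe_def, hsub, Nat.mul_div_assoc _ h8']
    exact ⟨hre, hrf, hr0, hrodd, hr2D, hlt, h8', hNe_eq⟩
  have hgcd0 : e.gcd f ≠ 0 := fun h => hf0 (Nat.eq_zero_of_gcd_eq_zero_right h)
  have hGscale : ∀ r : ℕ, r ∣ e → ∀ q ∈ mDset (D / r ^ 2) (e / r),
      Int.gcd ((r : ℤ) * q.1) (Int.gcd ((r : ℤ) * q.2.1)
        (Int.gcd ((r : ℤ) * q.2.2) (e : ℤ))) = r := by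
    intro r hre q hq
    have he_eq : (e : ℤ) = (r : ℤ) * ((e / r : ℕ) : ℤ) := by
      exact_mod_cast (Nat.mul_div_cancel' hre).symm
    rw [he_eq, gcd_scale, hq.2.2.2.2.2, mul_one]
  have hunion : Tset (Ne : ℤ) = ⋃ r ∈ (e.gcd f).divisors,
      scale r '' mDset (D / r ^ 2) (e / r) := by
    ext ⟨a, b, d⟩
    simp only [Set.mem_iUnion, exists_prop]
    constructor
    · rintro ⟨h1, h2, h3, h4, h5⟩
      set g := Int.gcd a ((Int.gcd b ((Int.gcd d (e : ℤ) : ℕ) : ℤ) : ℕ) : ℤ) with hg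
      have hda : (g : ℤ) ∣ a := Int.gcd_dvd_left _ _
      have hM1 : (g : ℤ) ∣ ((Int.gcd b ((Int.gcd d (e : ℤ) : ℕ) : ℤ) : ℕ) : ℤ) :=
        Int.gcd_dvd_right _ _
      have hdb : (g : ℤ) ∣ b := hM1.trans (Int.gcd_dvd_left _ _)
      have hM2 : (g : ℤ) ∣ ((Int.gcd d (e : ℤ) : ℕ) : ℤ) := hM1.trans (Int.gcd_dvd_right _ _)
      have hdd : (g : ℤ) ∣ d := hM2.trans (Int.gcd_dvd_left _ _)
      have hdeZ : (g : ℤ) ∣ (e : ℤ) := hM2.trans (Int.gcd_dvd_right _ _)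
      have hge : g ∣ e := by exact_mod_cast hdeZ
      have hg0 : 0 < g := Nat.pos_of_dvd_of_pos hge he0
      have hgz : (0 : ℤ) < (g : ℤ) := by exact_mod_cast hg0
      have hgodd : Odd g := by
        rcases Nat.even_or_odd g with h | h
        · exfalso
          have h2' : 2 ∣ e := dvd_trans h.two_dvd hge
          rw [Nat.odd_iff] at he; omega
        · exact h
      have hg2Ne : g ^ 2 ∣ Ne := by
        have hz : (g : ℤ) ^ 2 ∣ (Ne : ℤ) := by
          rw [← h5, sq]; exact mul_dvd_mul hda hdd
        have hz2 : ((g ^ 2 : ℕ) : ℤ) ∣ ((Ne : ℕ) : ℤ) := by push_cast; exact hz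
        exact_mod_cast hz2
      have hg2D : g ^ 2 ∣ D := by
        have h6 : g ^ 2 ∣ 8 * Ne := hg2Ne.mul_left 8
        rw [hNe8] at h6
        have h7 : g ^ 2 ∣ e ^ 2 := pow_dvd_pow_of_dvd hge 2
        have h9 : g ^ 2 ∣ (D - e ^ 2) + e ^ 2 := dvd_add h6 h7
        rwa [Nat.sub_add_cancel he2.le] at h9
      have hgf : g ∣ f := key_dvd D f D₀ hD hmod hfD hprim g hgodd hg2D
      have hgmem : g ∈ (e.gcd f).divisors :=
        Nat.mem_divisors.mpr ⟨Nat.dvd_gcd hge hgf, hgcd0⟩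
      obtain ⟨hge', hgf', hg0', hgodd', hg2D', hltg, h8g, hNeg⟩ := hfacts g hgmem
      obtain ⟨a', ha'⟩ := hda
      obtain ⟨b', hb'⟩ := hdb
      obtain ⟨d', hd'⟩ := hdd
      refine ⟨g, hgmem, (a', b', d'), ⟨?_, ?_, ?_, ?_, ?_, ?_⟩, ?_⟩
      · nlinarith [h1, hgz]
      · nlinarith [h2, hgz]
      · nlinarith [h3, hgz]
      · rw [ha', hb'] at h4; exact (mul_lt_mul_iff_right₀ hgz).mp h4
      · -- product
        rw [int_div_eq _ _ hltg.le h8g]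
        have hcast : ((Ne : ℕ) : ℤ) = (g : ℤ) ^ 2 * (((D / g ^ 2 - (e / g) ^ 2) / 8 : ℕ) : ℤ) := by
          rw [hNeg]; push_cast; ring
        have h10 : (g : ℤ) ^ 2 * (a' * d') = (g : ℤ) ^ 2 * (((D / g ^ 2 - (e / g) ^ 2) / 8 : ℕ) : ℤ) := by
          rw [← hcast, ← h5, ha', hd']; ring
        exact mul_left_cancel₀ (by positivity) h10
      · -- gcd = 1
        have he_eq : (e : ℤ) = (g : ℤ) * ((e / g : ℕ) : ℤ) := by
          exact_mod_cast (Nat.mul_div_cancel' hge).symm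
        have h11 := gcd_scale g a' b' d' ((e / g : ℕ) : ℤ)
        rw [← ha', ← hb', ← hd', ← he_eq, ← hg] at h11
        exact Nat.eq_of_mul_eq_mul_left hg0 (by rw [mul_one, ← h11])
      · show scale g (a', b', d') = (a, b, d)
        simp only [scale]
        rw [← ha', ← hb', ← hd']
    · rintro ⟨r, hrmem, ⟨a', b', d'⟩, hq, hsc⟩
      rw [← hsc]
      show scale r (a', b', d') ∈ Tset (Ne : ℤ)
      simp only [Tset, Set.mem_setOf_eq, scale]
      obtain ⟨hre, hrf, hr0, hrodd, hr2D, hltr, h8r, hNer⟩ := hfacts r hrmem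
      obtain ⟨h1, h2, h3, h4, h5, -⟩ := hq
      have hrz : (0 : ℤ) < (r : ℤ) := by exact_mod_cast hr0
      rw [int_div_eq _ _ hltr.le h8r] at h5
      refine ⟨mul_pos hrz h1, mul_pos hrz h2, mul_nonneg hrz.le h3,
        (mul_lt_mul_iff_right₀ hrz).mpr h4, ?_⟩
      show ((r : ℤ) * a') * ((r : ℤ) * d') = (Ne : ℤ)
      have hcast : ((Ne : ℕ) : ℤ) = (r : ℤ) ^ 2 * (((D / r ^ 2 - (e / r) ^ 2) / 8 : ℕ) : ℤ) := by
        rw [hNer]; push_cast; ring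
      rw [hcast, ← h5]; ring
  rw [← Tset_ncard Ne hNe, hunion, ncard_finset_biUnion]
  · refine Finset.sum_congr rfl fun r hr => ?_
    obtain ⟨hre, hrf, hr0, -⟩ := hfacts r hr
    rw [Set.ncard_image_of_injOn ((scale_injective r hr0).injOn), mD_eq]
  · intro r hr
    obtain ⟨hre, hrf, hr0, hrodd, hr2D, hltr, h8r, -⟩ := hfacts r hr
    exact (mDset_finite _ _ hltr h8r).image _
  · intro r hr s hs hrs
    rw [Set.disjoint_left]
    rintro x ⟨q, hq, rfl⟩ ⟨q', hq', hx⟩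
    apply hrs
    have hG1 := hGscale r (hfacts r hr).1 q hq
    have hG2 := hGscale s (hfacts s hs).1 q' hq'
    have h12 : ((s:ℤ)*q'.1, (s:ℤ)*q'.2.1, (s:ℤ)*q'.2.2) = ((r:ℤ)*q.1, (r:ℤ)*q.2.1, (r:ℤ)*q.2.2) := hx
    simp only [Prod.mk.injEq] at h12
    obtain ⟨e1, e2, e3⟩ := h12
    rw [← hG1, ← hG2, e1, e2, e3]

end Partition

lemma divisors_gcd_eq (e f : ℕ) (hf : f ≠ 0) :
    (e.gcd f).divisors = f.divisors.filter (· ∣ e) := by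
  ext r
  simp only [Nat.mem_divisors, Finset.mem_filter, Nat.dvd_gcd_iff]
  constructor
  · rintro ⟨⟨h1, h2⟩, -⟩; exact ⟨⟨h2, hf⟩, h1⟩
  · rintro ⟨⟨h1, -⟩, h2⟩; exact ⟨⟨h2, h1⟩, fun h => hf (Nat.eq_zero_of_gcd_eq_zero_right h)⟩

noncomputable def SD (D' : ℕ) : ℤ :=
  ∑ e ∈ (Finset.range D').filter (fun e => Odd e ∧ e ^ 2 < D'),
    (-1 : ℤ) ^ ((e - 1) / 2) * (e : ℤ) * (mD D' e : ℤ)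

theorem sigma_sum_eq_sum_SD (D f D₀ : ℕ) (hD : 0 < D) (hsq : ¬ IsSquare D)
    (hmod : D % 8 = 1) (hfD : D = f ^ 2 * D₀)
    (hD₀mod : D₀ % 8 = 0 ∨ D₀ % 8 = 1 ∨ D₀ % 8 = 4)
    (hprim : ¬ ∃ g D' : ℕ, 1 < g ∧ D₀ = g ^ 2 * D' ∧
      (D' % 8 = 0 ∨ D' % 8 = 1 ∨ D' % 8 = 4)) :
    ∑ e ∈ (Finset.range D).filter (fun e => Odd e ∧ e ^ 2 < D),
        (-1 : ℤ) ^ ((e - 1) / 2) * (e : ℤ) * (ArithmeticFunction.sigma 1 ((D - e ^ 2) / 8) : ℤ)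
      = ∑ r ∈ f.divisors, (-1 : ℤ) ^ ((r - 1) / 2) * (r : ℤ) * SD (D / r ^ 2) := by
  classical
  have hf0 : f ≠ 0 := by rintro rfl; simp at hfD; omega
  have step1 : ∑ e ∈ (Finset.range D).filter (fun e => Odd e ∧ e ^ 2 < D),
        (-1 : ℤ) ^ ((e - 1) / 2) * (e : ℤ) * (ArithmeticFunction.sigma 1 ((D - e ^ 2) / 8) : ℤ)
      = ∑ e ∈ (Finset.range D).filter (fun e => Odd e ∧ e ^ 2 < D),
          ∑ r ∈ f.divisors, (if r ∣ e then
            (-1 : ℤ) ^ ((e - 1) / 2) * (e : ℤ) * (mD (D / r ^ 2) (e / r) : ℤ) else 0) := by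
    refine Finset.sum_congr rfl fun e hemem => ?_
    rw [Finset.mem_filter] at hemem
    obtain ⟨-, he, he2⟩ := hemem
    rw [T_partition D f D₀ hD hmod hfD hprim e he he2, divisors_gcd_eq e f hf0,
      Nat.cast_sum, Finset.mul_sum, Finset.sum_filter]
  rw [step1, Finset.sum_comm]
  refine Finset.sum_congr rfl fun r hrmem => ?_
  rw [Nat.mem_divisors] at hrmem
  obtain ⟨hrf, -⟩ := hrmem
  have hr0 : 0 < r := Nat.pos_of_dvd_of_pos hrf (Nat.pos_of_ne_zero hf0)
  have hfodd : Odd f := by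
    rcases Nat.even_or_odd f with ⟨k, rfl⟩ | h
    · exfalso
      have : D = 2 * (2 * k * k * D₀) := by rw [hfD]; ring
      omega
    · exact h
  have hrodd : Odd r := by
    rcases Nat.even_or_odd r with h | h
    · exfalso
      have h2 : 2 ∣ f := dvd_trans h.two_dvd hrf
      rw [Nat.odd_iff] at hfodd; omega
    · exact h
  have hr2D : r ^ 2 ∣ D := hfD ▸ ((pow_dvd_pow_of_dvd hrf 2).mul_right D₀)
  have hDD : r ^ 2 * (D / r ^ 2) = D := Nat.mul_div_cancel' hr2D
  rw [← Finset.sum_filter, SD, Finset.mul_sum]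
  refine Finset.sum_bij' (i := fun e _ => e / r) (j := fun e' _ => r * e')
    ?_ ?_ ?_ ?_ ?_
  · -- hi
    intro e hemem
    simp only [Finset.mem_filter, Finset.mem_range] at hemem ⊢
    obtain ⟨⟨heD, he, he2⟩, hre⟩ := hemem
    have hee : r * (e / r) = e := Nat.mul_div_cancel' hre
    have hlt : (e / r) ^ 2 < D / r ^ 2 := by
      have h1 : r ^ 2 * (e / r) ^ 2 < r ^ 2 * (D / r ^ 2) := by
        rw [← mul_pow, hee, hDD]; exact he2
      exact lt_of_mul_lt_mul_left h1 (Nat.zero_le _)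
    have he0 : 0 < e / r := Nat.div_pos (Nat.le_of_dvd he.pos hre) hr0
    refine ⟨?_, odd_div he hre, hlt⟩
    nlinarith [hlt, he0]
  · -- hj
    intro e' he'mem
    simp only [Finset.mem_filter, Finset.mem_range] at he'mem ⊢
    obtain ⟨he'D, he', he'2⟩ := he'mem
    have h1 : (r * e') ^ 2 < D := by
      rw [mul_pow, ← hDD]
      exact mul_lt_mul_of_pos_left he'2 (by positivity)
    have h0 : 0 < r * e' := Nat.mul_pos hr0 he'.pos
    exact ⟨⟨by nlinarith, hrodd.mul he', h1⟩, dvd_mul_right r e'⟩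
  · intro e hemem
    simp only [Finset.mem_filter] at hemem
    exact Nat.mul_div_cancel' hemem.2
  · intro e' _
    exact Nat.mul_div_cancel_left _ hr0
  · intro e hemem
    simp only [Finset.mem_filter] at hemem
    obtain ⟨⟨-, he, -⟩, hre⟩ := hemem
    have h1 : r * (e / r) = e := Nat.mul_div_cancel' hre
    have h2 := signmul hrodd (odd_div he hre)
    rw [h1] at h2
    have h3 : (e : ℤ) = (r : ℤ) * ((e / r : ℕ) : ℤ) := by exact_mod_cast h1.symm
    rw [h2, h3]; ring
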